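/- Let A be an n×n complex matrix such that every eigenvalue μ ∈ spectrum ℂ A satisfies Re μ ≠ 0. Then there exists an n×n complex matrix F such that: F⬝A = A⬝F; F⬝F = 1; and for every eigenvalue μ ∈ spectrum ℂ A and every vector v ∈ ℂⁿ with ((A − μ•1)^n) *ᵥ v = 0, one has F *ᵥ v = v if Re μ > 0 and F *ᵥ v = −v if Re μ < 0. -/

import Mathlib

open Matrix Polynomial

private lemma eval_charpoly_aux {n : ℕ} (A : Matrix (Fin n) (Fin n) ℂ) (μ : ℂ) :
    A.charpoly.eval μ = (μ • (1 : Matrix (Fin n) (Fin n) ℂ) - A).det := by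
  rw [Matrix.charpoly, ← Polynomial.coe_evalRingHom, RingHom.map_det]
  congr 1
  ext i j
  by_cases h : i = j <;>
    simp [h, charmatrix_apply, Matrix.diagonal_apply, Matrix.one_apply]

theorem stmt_9 {n : ℕ} (A : Matrix (Fin n) (Fin n) ℂ)
    (hA : ∀ μ ∈ spectrum ℂ A, μ.re ≠ 0) :
    ∃ F : Matrix (Fin n) (Fin n) ℂ,
      F * A = A * F ∧ F * F = 1 ∧
      ∀ μ ∈ spectrum ℂ A, ∀ v : Fin n → ℂ, ((A - μ • 1) ^ n) *ᵥ v = 0 →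
        (0 < μ.re → F *ᵥ v = v) ∧ (μ.re < 0 → F *ᵥ v = -v) := by
  classical
  have hspec : ∀ μ : ℂ, μ ∈ spectrum ℂ A ↔ A.charpoly.IsRoot μ := by
    intro μ
    rw [spectrum.mem_iff, Matrix.isUnit_iff_isUnit_det, isUnit_iff_ne_zero, not_ne_iff,
      Algebra.algebraMap_eq_smul_one, IsRoot, eval_charpoly_aux]
  have hch0 : A.charpoly ≠ 0 := A.charpoly_monic.ne_zero
  set S : Finset ℂ := A.charpoly.roots.toFinset with hSdef
  have hroot_spec : ∀ μ ∈ S, μ ∈ spectrum ℂ A := fun μ hμ =>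
    (hspec μ).2 (isRoot_of_mem_roots (Multiset.mem_toFinset.1 hμ))
  set Sp : Finset ℂ := S.filter fun μ => 0 < μ.re with hSp
  set Sm : Finset ℂ := S.filter fun μ => μ.re < 0 with hSm
  have hdisj : Disjoint Sp Sm := by
    rw [Finset.disjoint_left]
    intro μ h1 h2
    exact absurd ((Finset.mem_filter.1 h1).2.trans (Finset.mem_filter.1 h2).2) (lt_irrefl _)
  have hunion : Sp ∪ Sm = S := by
    ext μ
    simp only [hSp, hSm, Finset.mem_union, Finset.mem_filter]
    constructor
    · rintro (⟨h, _⟩ | ⟨h, _⟩) <;> exact h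
    · intro h
      rcases lt_or_gt_of_ne (hA μ (hroot_spec μ h)) with h' | h'
      · exact Or.inr ⟨h, h'⟩
      · exact Or.inl ⟨h, h'⟩
  set f : ℂ[X] := ∏ μ ∈ Sp, (X - C μ) ^ n with hf
  set g : ℂ[X] := ∏ μ ∈ Sm, (X - C μ) ^ n with hg
  have hcop : IsCoprime f g := by
    apply IsCoprime.prod_left
    intro μ hμ
    apply IsCoprime.prod_right
    intro ν hν
    have hne : μ ≠ ν := by
      rintro rfl
      exact Finset.disjoint_left.1 hdisj hμ hν
    exact (isCoprime_X_sub_C_of_isUnit_sub (isUnit_iff_ne_zero.2 (sub_ne_zero.2 hne))).pow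
  -- charpoly divides f * g
  have hdvd : A.charpoly ∣ f * g := by
    have hsplit : A.charpoly.Splits := IsAlgClosed.splits _
    have hfact : A.charpoly = (A.charpoly.roots.map fun a => X - C a).prod :=
      hsplit.eq_prod_roots_of_monic A.charpoly_monic
    have hcount : ∀ x : ℂ, Multiset.count x A.charpoly.roots ≤ n := fun x =>
      le_trans (Multiset.count_le_card _ _) (le_trans A.charpoly.card_roots'
        (by simp [A.charpoly_natDegree_eq_dim]))
    rw [hfact, Finset.prod_multiset_map_count, ← hSdef, ← hunion,
      Finset.prod_union hdisj]
    exact mul_dvd_mul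
      (Finset.prod_dvd_prod_of_dvd _ _ fun x _ => pow_dvd_pow _ (hcount x))
      (Finset.prod_dvd_prod_of_dvd _ _ fun x _ => pow_dvd_pow _ (hcount x))
  obtain ⟨a, b, hab⟩ := hcop
  set p : ℂ[X] := b * g - a * f with hp
  refine ⟨aeval A p, ?_, ?_, ?_⟩
  · calc aeval A p * A = aeval A (p * X) := by rw [_root_.map_mul, aeval_X]
    _ = aeval A (X * p) := by rw [mul_comm]
    _ = A * aeval A p := by rw [_root_.map_mul, aeval_X]
  · have hp2 : p * p = 1 - 4 * a * b * (f * g) := by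
      linear_combination (a * f + b * g + 1) * hab
    have hfg0 : aeval A (f * g) = 0 := by
      obtain ⟨c, hc⟩ := hdvd
      rw [hc, _root_.map_mul, aeval_self_charpoly, zero_mul]
    rw [← _root_.map_mul, hp2, _root_.map_sub, _root_.map_one, _root_.map_mul, hfg0, mul_zero, sub_zero]
  · intro μ hμ v hv
    have hμS : μ ∈ S := Multiset.mem_toFinset.2 ((mem_roots hch0).2 ((hspec μ).1 hμ))
    have key : aeval A ((X - C μ) ^ n) = (A - μ • 1) ^ n := by
      rw [_root_.map_pow, _root_.map_sub, aeval_X, aeval_C, Algebra.algebraMap_eq_smul_one]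
    constructor
    · intro hpos
      have hμSp : μ ∈ Sp := Finset.mem_filter.2 ⟨hμS, hpos⟩
      have hfsplit : f = (X - C μ) ^ n * ∏ ν ∈ Sp.erase μ, (X - C ν) ^ n :=
        (Finset.mul_prod_erase Sp _ hμSp).symm
      have h1 : p - 1 = -(2 * a * ∏ ν ∈ Sp.erase μ, (X - C ν) ^ n) * (X - C μ) ^ n := by
        rw [hp]
        linear_combination hab - 2 * a * hfsplit
      have : aeval A p - 1 = aeval A (-(2 * a * ∏ ν ∈ Sp.erase μ, (X - C ν) ^ n)) *
          (A - μ • 1) ^ n := by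
        rw [← key, ← _root_.map_mul, ← h1]
        simp
      have h0 : (aeval A p - 1) *ᵥ v = 0 := by
        rw [this, ← mulVec_mulVec, hv, mulVec_zero]
      rw [sub_mulVec, one_mulVec, sub_eq_zero] at h0
      exact h0
    · intro hneg
      have hμSm : μ ∈ Sm := Finset.mem_filter.2 ⟨hμS, hneg⟩
      have hgsplit : g = (X - C μ) ^ n * ∏ ν ∈ Sm.erase μ, (X - C ν) ^ n :=
        (Finset.mul_prod_erase Sm _ hμSm).symm
      have h1 : p + 1 = (2 * b * ∏ ν ∈ Sm.erase μ, (X - C ν) ^ n) * (X - C μ) ^ n := by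
        rw [hp]
        linear_combination -hab + 2 * b * hgsplit
      have : aeval A p + 1 = aeval A (2 * b * ∏ ν ∈ Sm.erase μ, (X - C ν) ^ n) *
          (A - μ • 1) ^ n := by
        rw [← key, ← _root_.map_mul, ← h1]
        simp
      have h0 : (aeval A p + 1) *ᵥ v = 0 := by
        rw [this, ← mulVec_mulVec, hv, mulVec_zero]
      rw [add_mulVec, one_mulVec, add_eq_zero_iff_eq_neg] at h0
      exact h0
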